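/- arXiv:1707.04661 — 4 statements merged into one kernel-verified Lean document; each statement's English description precedes it below -/
import Mathlib

section
/- Let K be a field and let b, c, b', a, a' be finite index sets. Let M be a matrix over K with rows indexed by b ⊔ c ⊔ b' and columns indexed by a ⊔ b ⊔ c ⊔ b' ⊔ a', such that M(i,v) = 0 whenever i ∈ b and v ∈ b' ⊔ a', and M(i,v) = 0 whenever i ∈ b' and v ∈ a ⊔ b. If the submatrix of M consisting of the rows indexed by b ⊔ c and the columns indexed by a ⊔ b has rank |b| + |c|, and the submatrix of M consisting of the rows indexed by b' and the columns indexed by c ⊔ b' ⊔ a' has rank |b'|, then M has full row rank |b| + |c| + |b'|. -/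
lemma aux_li_of_rank {K : Type*} [Field K] {m n : Type*} [Fintype m] [Fintype n]
    {A : Matrix m n K} (h : A.rank = Fintype.card m) : LinearIndependent K A := by
  change LinearIndependent K A.row
  rw [linearIndependent_iff_card_eq_finrank_span, Set.finrank,
    ← Matrix.rank_eq_finrank_span_row, h]

/-- gluing lemma for B-matrices, linear algebra form.
Let `K` be a field and `a b c b' a'` finite index sets. Let `M` be a matrix with rows
indexed by `b ⊕ c ⊕ b'` and columns indexed by `a ⊕ b ⊕ c ⊕ b' ⊕ a'` with the displayed
block-zero pattern. If the submatrix with rows `b ⊕ c` and columns `a ⊕ b` has rank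
`|b| + |c|`, and the submatrix with rows `b'` and columns `c ⊕ b' ⊕ a'` has rank `|b'|`,
then `M` has full row rank `|b| + |c| + |b'|`. -/
theorem stmt0 {K : Type*} [Field K]
    {a b c b' a' : Type*} [Fintype a] [Fintype b] [Fintype c] [Fintype b'] [Fintype a']
    [DecidableEq a] [DecidableEq b] [DecidableEq c] [DecidableEq b'] [DecidableEq a']
    (M : Matrix (b ⊕ c ⊕ b') (a ⊕ b ⊕ c ⊕ b' ⊕ a') K)
    (hbb' : ∀ (i : b) (v : b'), M (Sum.inl i) (Sum.inr (Sum.inr (Sum.inr (Sum.inl v)))) = 0)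
    (hba' : ∀ (i : b) (v : a'), M (Sum.inl i) (Sum.inr (Sum.inr (Sum.inr (Sum.inr v)))) = 0)
    (hb'a : ∀ (i : b') (v : a), M (Sum.inr (Sum.inr i)) (Sum.inl v) = 0)
    (hb'b : ∀ (i : b') (v : b), M (Sum.inr (Sum.inr i)) (Sum.inr (Sum.inl v)) = 0)
    (hrank1 : (M.submatrix
        (Sum.elim (fun i : b => (Sum.inl i : b ⊕ c ⊕ b'))
          (fun i : c => (Sum.inr (Sum.inl i) : b ⊕ c ⊕ b')))
        (Sum.elim (fun v : a => (Sum.inl v : a ⊕ b ⊕ c ⊕ b' ⊕ a'))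
          (fun v : b => (Sum.inr (Sum.inl v) : a ⊕ b ⊕ c ⊕ b' ⊕ a')))).rank
        = Fintype.card b + Fintype.card c)
    (hrank2 : (M.submatrix
        (fun i : b' => (Sum.inr (Sum.inr i) : b ⊕ c ⊕ b'))
        (Sum.elim (fun v : c => (Sum.inr (Sum.inr (Sum.inl v)) : a ⊕ b ⊕ c ⊕ b' ⊕ a'))
          (Sum.elim (fun v : b' => (Sum.inr (Sum.inr (Sum.inr (Sum.inl v))) : a ⊕ b ⊕ c ⊕ b' ⊕ a'))
            (fun v : a' => (Sum.inr (Sum.inr (Sum.inr (Sum.inr v))) : a ⊕ b ⊕ c ⊕ b' ⊕ a'))))).rank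
        = Fintype.card b') :
    M.rank = Fintype.card b + Fintype.card c + Fintype.card b' := by
  classical
  have h1 : LinearIndependent K (M.submatrix
      (Sum.elim (fun i : b => (Sum.inl i : b ⊕ c ⊕ b'))
        (fun i : c => (Sum.inr (Sum.inl i) : b ⊕ c ⊕ b')))
      (Sum.elim (fun v : a => (Sum.inl v : a ⊕ b ⊕ c ⊕ b' ⊕ a'))
        (fun v : b => (Sum.inr (Sum.inl v) : a ⊕ b ⊕ c ⊕ b' ⊕ a')))) :=
    aux_li_of_rank (by rw [hrank1]; simp [Fintype.card_sum])
  have h2 : LinearIndependent K (M.submatrix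
      (fun i : b' => (Sum.inr (Sum.inr i) : b ⊕ c ⊕ b'))
      (Sum.elim (fun v : c => (Sum.inr (Sum.inr (Sum.inl v)) : a ⊕ b ⊕ c ⊕ b' ⊕ a'))
        (Sum.elim (fun v : b' => (Sum.inr (Sum.inr (Sum.inr (Sum.inl v))) : a ⊕ b ⊕ c ⊕ b' ⊕ a'))
          (fun v : a' => (Sum.inr (Sum.inr (Sum.inr (Sum.inr v))) : a ⊕ b ⊕ c ⊕ b' ⊕ a'))))) :=
    aux_li_of_rank (by rw [hrank2])
  have hM : LinearIndependent K M := by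
    change LinearIndependent K (fun i => M i)
    rw [Fintype.linearIndependent_iff]
    intro g H i
    -- pointwise version of H
    have Hv : ∀ v, (∑ j : b, g (Sum.inl j) * M (Sum.inl j) v)
        + (∑ j : c, g (Sum.inr (Sum.inl j)) * M (Sum.inr (Sum.inl j)) v)
        + (∑ j : b', g (Sum.inr (Sum.inr j)) * M (Sum.inr (Sum.inr j)) v) = 0 := by
      intro v
      have := congrFun H v
      simp only [Finset.sum_apply, Pi.smul_apply, smul_eq_mul, Pi.zero_apply,
        Fintype.sum_sum_type] at this
      linear_combination this
    -- step 1: coefficients on b ⊕ c vanish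
    have hg1 : ∀ j : b ⊕ c, g (Sum.elim (fun i : b => (Sum.inl i : b ⊕ c ⊕ b'))
        (fun i : c => Sum.inr (Sum.inl i)) j) = 0 := by
      replace h1 := Fintype.linearIndependent_iff.mp h1
      apply h1
      funext v
      have := Hv (Sum.elim (fun v : a => (Sum.inl v : a ⊕ b ⊕ c ⊕ b' ⊕ a'))
          (fun v : b => Sum.inr (Sum.inl v)) v)
      simp only [Finset.sum_apply, Pi.smul_apply, smul_eq_mul, Pi.zero_apply,
        Fintype.sum_sum_type, Matrix.submatrix_apply, Sum.elim_inl, Sum.elim_inr]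
      cases v with
      | inl v => simp [hb'a _ v] at this ⊢; linear_combination this
      | inr v => simp [hb'b _ v] at this ⊢; linear_combination this
    have hgb : ∀ j : b, g (Sum.inl j) = 0 := fun j => hg1 (Sum.inl j)
    have hgc : ∀ j : c, g (Sum.inr (Sum.inl j)) = 0 := fun j => hg1 (Sum.inr j)
    -- step 2: coefficients on b' vanish
    have hgb' : ∀ j : b', g (Sum.inr (Sum.inr j)) = 0 := by
      replace h2 := Fintype.linearIndependent_iff.mp h2
      intro j
      refine h2 (fun j => g (Sum.inr (Sum.inr j))) ?_ j
      funext v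
      have := Hv (Sum.elim (fun v : c => (Sum.inr (Sum.inr (Sum.inl v)) : a ⊕ b ⊕ c ⊕ b' ⊕ a'))
          (Sum.elim (fun v : b' => Sum.inr (Sum.inr (Sum.inr (Sum.inl v))))
            (fun v : a' => Sum.inr (Sum.inr (Sum.inr (Sum.inr v))))) v)
      simp only [hgb, hgc, zero_mul, Finset.sum_const_zero, zero_add] at this
      simpa [Finset.sum_apply, Matrix.submatrix_apply] using this
    cases i with
    | inl j => exact hgb j
    | inr j => cases j with
      | inl j => exact hgc j
      | inr j => exact hgb' j
  rw [hM.rank_matrix]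
  simp [Fintype.card_sum, add_assoc]
end

section
/- Let k be a field, let p ≤ q be positive integers, and let B be a p×q integer matrix whose rows b_1, …, b_p are linearly independent over ℚ. Work in the group algebra of the additive group ℤ^q over k (Laurent polynomials in q variables), writing X^g for the basis element corresponding to g ∈ ℤ^q. Suppose z_1, …, z_N are elements of this group algebra such that for each i there is a vector g_i ∈ ℤ^q, a finite set S_i ⊆ ℤ_{≥0}^p containing 0, and scalars c_{i,e} ∈ k for e ∈ S_i with c_{i,0} ≠ 0, such that z_i = Σ_{e ∈ S_i} c_{i,e} · X^{g_i − eB}, where eB denotes the row vector Σ_u e(u)·b_u ∈ ℤ^q. If the vectors g_1, …, g_N are pairwise distinct, then z_1, …, z_N are linearly independent over k. -/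
open AddMonoidAlgebra

/-- linear independence of elements with distinct well-defined
g-vectors. Work in the group algebra of `ℤ^q` over the field `k` (Laurent polynomials
in `q` variables), with basis elements `X^g = single g 1` for `g ∈ ℤ^q`.
If `z i = ∑_{e ∈ S i} c i e • X^(g i − e·B)` where each `S i ⊆ ℤ_{≥0}^p` is finite,
`0 ∈ S i`, `c i 0 ≠ 0`, the rows of `B` are linearly independent over `ℚ`, and the
vectors `g i` are pairwise distinct, then the `z i` are linearly independent over `k`. -/
theorem stmt2 {k : Type*} [Field k] {p q : ℕ} (hp : 0 < p) (hpq : p ≤ q)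
    (B : Fin p → Fin q → ℤ)
    (hind : LinearIndependent ℚ (fun u : Fin p => fun v : Fin q => (B u v : ℚ)))
    {N : ℕ} (z : Fin N → AddMonoidAlgebra k (Fin q → ℤ))
    (g : Fin N → Fin q → ℤ)
    (S : Fin N → Finset (Fin p → ℕ))
    (c : Fin N → (Fin p → ℕ) → k)
    (h0mem : ∀ i, (0 : Fin p → ℕ) ∈ S i)
    (hc0 : ∀ i, c i 0 ≠ 0)
    (hz : ∀ i, z i = ∑ e ∈ S i, c i e •
      AddMonoidAlgebra.single ((g i) - fun v : Fin q => ∑ u : Fin p, (e u : ℤ) * B u v) (1 : k))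
    (hg : Function.Injective g) :
    LinearIndependent k z := by
  classical
  -- a linear functional sending every row of B to 1
  obtain ⟨φ, hφb⟩ : ∃ φ : (Fin q → ℚ) →ₗ[ℚ] ℚ, ∀ u, φ (fun v => (B u v : ℚ)) = 1 := by
    obtain ⟨φ, hφ⟩ := ((Finsupp.lsum ℚ (fun _ : Fin p => (LinearMap.id : ℚ →ₗ[ℚ] ℚ))).comp
      hind.repr).exists_extend
    refine ⟨φ, fun u => ?_⟩
    have hmem : (fun v => (B u v : ℚ)) ∈ Submodule.span ℚ
        (Set.range (fun u : Fin p => fun v : Fin q => (B u v : ℚ))) :=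
      Submodule.subset_span ⟨u, rfl⟩
    have h2 := LinearMap.congr_fun hφ ⟨_, hmem⟩
    simp only [LinearMap.comp_apply, Submodule.subtype_apply] at h2
    rw [h2, hind.repr_eq_single u ⟨_, hmem⟩ rfl]
    simp
  set Φ : (Fin q → ℤ) → ℚ := fun x => φ (fun v => (x v : ℚ)) with hΦdef
  have hΦ : ∀ (x : Fin q → ℤ) (e : Fin p → ℕ),
      Φ (x - fun v : Fin q => ∑ u : Fin p, (e u : ℤ) * B u v) = Φ x - ∑ u : Fin p, (e u : ℚ) := by
    intro x e
    have hcast : (fun v => (((x - fun v : Fin q => ∑ u : Fin p, (e u : ℤ) * B u v) v : ℤ) : ℚ))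
        = (fun v => (x v : ℚ)) - ∑ u : Fin p, (e u : ℚ) • (fun v => (B u v : ℚ)) := by
      funext v
      simp only [Pi.sub_apply, Finset.sum_apply, Pi.smul_apply, smul_eq_mul]
      push_cast
      ring
    simp only [hΦdef, hcast, map_sub, map_sum, map_smul, hφb, smul_eq_mul, mul_one]
  -- main argument
  rw [linearIndependent_iff']
  intro s
  induction s using Finset.strongInduction with
  | _ s ih =>
    intro f hsum i hi
    -- choose i₀ maximizing Φ (g ·) on s
    obtain ⟨i₀, hi₀s, hmax⟩ := s.exists_max_image (fun j => Φ (g j)) ⟨i, hi⟩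
    -- claim: each term g j - e·B = g i₀ with j ∈ s, e ∈ S j forces j = i₀, e = 0
    have hkey : ∀ j ∈ s, ∀ e ∈ S j,
        ((g j) - fun v : Fin q => ∑ u : Fin p, (e u : ℤ) * B u v) = g i₀ → j = i₀ ∧ e = 0 := by
      intro j hj e he heq
      have h1 : Φ (g j) - ∑ u : Fin p, (e u : ℚ) = Φ (g i₀) := by rw [← hΦ (g j) e, heq]
      have h2 : (0 : ℚ) ≤ ∑ u : Fin p, (e u : ℚ) :=
        Finset.sum_nonneg fun u _ => by positivity
      have h3 : (∑ u : Fin p, (e u : ℚ)) = 0 := by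
        have := hmax j hj
        linarith
      have he0 : e = 0 := by
        funext u
        have := (Finset.sum_eq_zero_iff_of_nonneg
          (fun u _ => by positivity : ∀ u ∈ Finset.univ, (0:ℚ) ≤ (e u : ℚ))).mp h3 u
          (Finset.mem_univ u)
        exact_mod_cast this
      subst he0
      have : g j = g i₀ := by
        rw [← heq]
        funext v
        simp
      exact ⟨hg this, rfl⟩
    -- evaluate the sum at the point g i₀
    have hsum' : (∑ i ∈ s, f i • ∑ e ∈ S i, c i e • Finsupp.single
        ((g i) - fun v : Fin q => ∑ u : Fin p, (e u : ℤ) * B u v) (1:k) : (Fin q → ℤ) →₀ k)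
        = 0 := by
      have h := hsum
      simp only [hz] at h
      have h2 := congrArg AddMonoidAlgebra.coeff h
      simpa only [AddMonoidAlgebra.coeff_sum, AddMonoidAlgebra.coeff_smul,
        AddMonoidAlgebra.coeff_single, AddMonoidAlgebra.coeff_zero] using h2
    have heval := congrArg (fun F : (Fin q → ℤ) →₀ k => F (g i₀)) hsum'
    simp only [Finsupp.finset_sum_apply, Finsupp.smul_apply, Finsupp.single_apply,
      Finsupp.coe_zero, Pi.zero_apply, smul_eq_mul] at heval
    have heval2 : ∑ j ∈ s, f j * ∑ e ∈ S j, c j e *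
        (if ((g j) - fun v : Fin q => ∑ u : Fin p, (e u : ℤ) * B u v) = g i₀ then (1:k) else 0)
        = 0 := by
      exact heval
    have hf0 : f i₀ = 0 := by
      have hx : ∑ j ∈ s, f j * ∑ e ∈ S j, c j e *
          (if ((g j) - fun v : Fin q => ∑ u : Fin p, (e u : ℤ) * B u v) = g i₀ then (1:k) else 0)
          = f i₀ * c i₀ 0 := by
        rw [Finset.sum_eq_single_of_mem i₀ hi₀s]
        · congr 1
          rw [Finset.sum_eq_single_of_mem 0 (h0mem i₀)]
          · rw [if_pos, mul_one]
            funext v; simp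
          · intro e he hne
            rw [if_neg, mul_zero]
            intro heq
            exact hne ((hkey i₀ hi₀s e he heq).2)
        · intro j hj hne
          rw [Finset.sum_eq_zero, mul_zero]
          intro e he
          rw [if_neg, mul_zero]
          intro heq
          exact hne ((hkey j hj e he heq).1)
      rw [hx] at heval2
      exact (mul_eq_zero.mp heval2).resolve_right (hc0 i₀)
    by_cases hii : i = i₀
    · rwa [hii]
    · refine ih (s.erase i₀) (Finset.erase_ssubset hi₀s) f ?_ i (Finset.mem_erase.mpr ⟨hii, hi⟩)
      rw [Finset.sum_erase_eq_sub hi₀s, hsum, hf0, zero_smul, sub_zero]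
end

section
/- Let k be a field and l ≥ 2. Let f_1, …, f_{l−1} be injective linear maps with f_i : k^i → k^{i+1}. Then there exist matrices h_1 ∈ SL_1(k), h_2 ∈ SL_2(k), …, h_{l−1} ∈ SL_{l−1}(k) and g = h_l ∈ SL_l(k) such that h_{i+1} ∘ f_i = ι_i ∘ h_i for every 1 ≤ i ≤ l−1, where ι_i : k^i → k^{i+1} is the standard step inclusion e_j ↦ e_j. -/
/-- The standard step inclusion matrix `ι_i : k^i → k^{i+1}`, `e_j ↦ e_j`. -/
def stepIncl (k : Type*) [Field k] (i : ℕ) : Matrix (Fin (i + 1)) (Fin i) k :=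
  fun r c => if (r : ℕ) = (c : ℕ) then 1 else 0

/-- `stepIncl` has injective `mulVec`. -/
lemma stepIncl_mulVec_injective (k : Type*) [Field k] (i : ℕ) :
    Function.Injective (stepIncl k i).mulVec := by
  intro x y hxy
  funext j
  have := congrFun hxy (Fin.castSucc j)
  simpa [Matrix.mulVec, dotProduct, stepIncl, Finset.sum_ite_eq',
    Fin.val_injective.eq_iff] using this

/-- Key lemma: any two injective `(i+1) × i` matrices are related by an `SL_{i+1}` matrix. -/
lemma key_lemma {k : Type*} [Field k] (i : ℕ) (M N : Matrix (Fin (i + 1)) (Fin i) k) :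
    ∃ A : Matrix (Fin (i + 1)) (Fin (i + 1)) k, A.det = 1 ∧
      (Function.Injective M.mulVec → Function.Injective N.mulVec → A * M = N) := by
  by_cases hM : Function.Injective M.mulVec
  · by_cases hN : Function.Injective N.mulVec
    · -- the real construction
      have liM : LinearIndependent k (fun j => M.transpose j) := Matrix.mulVec_injective_iff.mp hM
      have liN : LinearIndependent k (fun j => N.transpose j) := Matrix.mulVec_injective_iff.mp hN
      have hfr : i < Module.finrank k (Fin (i + 1) → k) := by
        rw [Module.finrank_fin_fun]; omega
      obtain ⟨v, liMv⟩ := exists_linearIndependent_snoc_of_lt_finrank liM hfr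
      obtain ⟨w, liNw⟩ := exists_linearIndependent_snoc_of_lt_finrank liN hfr
      set BM : Matrix (Fin (i + 1)) (Fin (i + 1)) k := (Matrix.of (Fin.snoc (fun j => M.transpose j) v)).transpose
        with hBM
      set BN : Matrix (Fin (i + 1)) (Fin (i + 1)) k := (Matrix.of (Fin.snoc (fun j => N.transpose j) w)).transpose
        with hBN
      have hBMu : IsUnit BM := by
        rw [← Matrix.mulVec_injective_iff_isUnit, Matrix.mulVec_injective_iff]
        simpa [hBM] using liMv
      have hBNu : IsUnit BN := by
        rw [← Matrix.mulVec_injective_iff_isUnit, Matrix.mulVec_injective_iff]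
        simpa [hBN] using liNw
      have hdM : BM.det ≠ 0 := by
        intro h; rw [Matrix.isUnit_iff_isUnit_det] at hBMu
        simp [h] at hBMu
      have hdN : BN.det ≠ 0 := by
        intro h; rw [Matrix.isUnit_iff_isUnit_det] at hBNu
        simp [h] at hBNu
      set c : k := BM.det * (BN.det)⁻¹ with hc
      set BN' : Matrix (Fin (i + 1)) (Fin (i + 1)) k :=
        BN.updateCol (Fin.last i) (c • fun r => BN r (Fin.last i)) with hBN'
      have hdetBN' : BN'.det = c * BN.det := by
        rw [hBN', Matrix.det_updateCol_smul, Matrix.updateCol_eq_self]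
      refine ⟨BN' * BM⁻¹, ?_, fun _ _ => ?_⟩
      · rw [Matrix.det_mul, hdetBN', Matrix.det_nonsing_inv, Ring.inverse_eq_inv', hc]
        field_simp
      · have hABM : BN' * BM⁻¹ * BM = BN' := by
          rw [Matrix.mul_assoc, Matrix.nonsing_inv_mul _ ((Matrix.isUnit_iff_isUnit_det _).mp hBMu),
            Matrix.mul_one]
        funext r j
        have h1 : ∀ s, M s j = BM s (Fin.castSucc j) := by
          intro s; simp [hBM, Matrix.transpose_apply, Fin.snoc_castSucc]
        have h2 : BN' r (Fin.castSucc j) = N r j := by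
          rw [hBN', Matrix.updateCol_apply, if_neg (by
            exact fun h => absurd (congrArg Fin.val h) (by simp [Fin.val_last]; omega))]
          simp [hBN, Matrix.transpose_apply, Fin.snoc_castSucc]
        calc ((BN' * BM⁻¹) * M) r j = ((BN' * BM⁻¹) * BM) r (Fin.castSucc j) := by
              simp only [Matrix.mul_apply]
              exact Finset.sum_congr rfl fun s _ => by rw [h1 s]
          _ = N r j := by rw [hABM, h2]
    · exact ⟨1, Matrix.det_one, fun _ h => absurd h hN⟩
  · exact ⟨1, Matrix.det_one, fun h _ => absurd h hM⟩

/-- transitivity of the `SL`-actions on chains of injective maps.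
Let `f_i : k^i → k^{i+1}` (`1 ≤ i ≤ l−1`) be injective linear maps. Then there exist
matrices `h_i ∈ SL_i(k)` for `1 ≤ i ≤ l` (with `g = h_l`) such that
`h_{i+1} ∘ f_i = ι_i ∘ h_i` for every `1 ≤ i ≤ l−1`, where `ι_i` is the standard
step inclusion `e_j ↦ e_j`. -/
theorem stmt11 {k : Type*} [Field k] {l : ℕ} (hl : 2 ≤ l)
    (f : (i : ℕ) → (Fin i → k) →ₗ[k] (Fin (i + 1) → k))
    (hinj : ∀ i : ℕ, 1 ≤ i → i ≤ l - 1 → Function.Injective (f i)) :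
    ∃ h : (i : ℕ) → Matrix (Fin i) (Fin i) k,
      (∀ i : ℕ, 1 ≤ i → i ≤ l → (h i).det = 1) ∧
      (∀ i : ℕ, 1 ≤ i → i ≤ l - 1 → ∀ x : Fin i → k,
        (h (i + 1)).mulVec (f i x) = (stepIncl k i).mulVec ((h i).mulVec x)) := by
  classical
  -- define `h` by recursion, using the key lemma at each step
  let h : (i : ℕ) → Matrix (Fin i) (Fin i) k := fun i =>
    Nat.rec 1 (fun j hj =>
      (key_lemma j (LinearMap.toMatrix' (f j)) (stepIncl k j * hj)).choose) i
  have hdet : ∀ i : ℕ, (h i).det = 1 := by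
    intro i
    cases i with
    | zero => simp [h]
    | succ j =>
      exact (key_lemma j (LinearMap.toMatrix' (f j)) (stepIncl k j * h j)).choose_spec.1
  refine ⟨h, fun i _ _ => hdet i, fun i hi1 hil x => ?_⟩
  have hMinj : Function.Injective (LinearMap.toMatrix' (f i)).mulVec := by
    have : (LinearMap.toMatrix' (f i)).mulVec = f i := by
      funext y
      rw [← Matrix.toLin'_apply, Matrix.toLin'_toMatrix']
    rw [this]
    exact hinj i hi1 hil
  have hNinj : Function.Injective (stepIncl k i * h i).mulVec := by
    have hu : IsUnit (h i) := (Matrix.isUnit_iff_isUnit_det _).mpr (by rw [hdet i]; exact isUnit_one)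
    intro x y hxy
    rw [← Matrix.mulVec_mulVec, ← Matrix.mulVec_mulVec] at hxy
    exact (Matrix.mulVec_injective_iff_isUnit.mpr hu)
      (stepIncl_mulVec_injective k i hxy)
  have hspec := (key_lemma i (LinearMap.toMatrix' (f i)) (stepIncl k i * h i)).choose_spec.2
    hMinj hNinj
  have hh : h (i + 1) * LinearMap.toMatrix' (f i) = stepIncl k i * h i := hspec
  have : (h (i + 1) * LinearMap.toMatrix' (f i)).mulVec x = (stepIncl k i * h i).mulVec x := by
    rw [hh]
  rwa [← Matrix.mulVec_mulVec, ← Matrix.mulVec_mulVec,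
    show (LinearMap.toMatrix' (f i)).mulVec x = f i x by
      rw [← Matrix.toLin'_apply, Matrix.toLin'_toMatrix']] at this
end

section
/- Let k be a field and l ≥ 2. Let f = (f_1,…,f_{l−1}) and f' = (f'_1,…,f'_{l−1}) be two chains of linear maps, f_i, f'_i : k^i → k^{i+1}. For 1 ≤ i ≤ l set F_i = f_{l−1}∘⋯∘f_i : k^i → k^l and F'_i = f'_{l−1}∘⋯∘f'_i : k^i → k^l (with F_l = F'_l = id). Assume that for every 1 ≤ i ≤ l−1 the l×l matrix whose first i columns are F_i(e_1),…,F_i(e_i) and whose last l−i columns are F'_{l−i}(e_1),…,F'_{l−i}(e_{l−i}) has nonzero determinant. Suppose g is an l×l matrix over k of determinant 1 and h_i, h'_i are i×i matrices of determinant 1 for 1 ≤ i ≤ l−1 such that, with h_l = h'_l = g, one has h_{i+1} ∘ f_i = f_i ∘ h_i and h'_{i+1} ∘ f'_i = f'_i ∘ h'_i for all 1 ≤ i ≤ l−1. Then g is the identity matrix. -/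
set_option maxHeartbeats 1000000


/-- freeness of the `SL_l`-action on generic pairs of decorated flags.
Let `f, f'` be two chains of linear maps `f_i, f'_i : k^i → k^{i+1}` with composites
`F_i = f_{l−1}∘⋯∘f_i`, `F'_i = f'_{l−1}∘⋯∘f'_i : k^i → k^l` (axiomatized by
`hFl, hFrec, hF'l, hF'rec`), and assume all the cross-determinants (the values of the
Schofield semi-invariants `s_{i,j}^{1,2}`) are nonzero. If `g ∈ SL_l(k)` and
`h_i, h'_i ∈ SL_i(k)` (`1 ≤ i ≤ l−1`), with `h_l = h'_l = g`, satisfy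
`h_{i+1} ∘ f_i = f_i ∘ h_i` and `h'_{i+1} ∘ f'_i = f'_i ∘ h'_i` for all `1 ≤ i ≤ l−1`,
then `g` is the identity matrix. -/
theorem stmt13 {k : Type*} [Field k] {l : ℕ} (hl : 2 ≤ l)
    (f f' : (i : ℕ) → (Fin i → k) →ₗ[k] (Fin (i + 1) → k))
    (Fc Fc' : (i : ℕ) → (Fin i → k) →ₗ[k] (Fin l → k))
    (hFl : Fc l = LinearMap.id) (hF'l : Fc' l = LinearMap.id)
    (hFrec : ∀ i : ℕ, 1 ≤ i → i ≤ l - 1 → Fc i = (Fc (i + 1)).comp (f i))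
    (hF'rec : ∀ i : ℕ, 1 ≤ i → i ≤ l - 1 → Fc' i = (Fc' (i + 1)).comp (f' i))
    (hgen : ∀ i : ℕ, 1 ≤ i → i ≤ l - 1 →
      (Matrix.of fun r c : Fin l =>
        if hc : (c : ℕ) < i then Fc i (Pi.single (⟨c, hc⟩ : Fin i) 1) r
        else Fc' (l - i)
          (Pi.single (⟨(c : ℕ) - i, by have := c.isLt; omega⟩ : Fin (l - i)) 1) r).det ≠ 0)
    (g : Matrix (Fin l) (Fin l) k) (hg : g.det = 1)
    (h h' : (i : ℕ) → Matrix (Fin i) (Fin i) k)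
    (hdet : ∀ i : ℕ, 1 ≤ i → i ≤ l - 1 → (h i).det = 1 ∧ (h' i).det = 1)
    (hhl : h l = g) (hh'l : h' l = g)
    (hint : ∀ i : ℕ, 1 ≤ i → i ≤ l - 1 → ∀ x : Fin i → k,
      (h (i + 1)).mulVec (f i x) = f i ((h i).mulVec x))
    (hint' : ∀ i : ℕ, 1 ≤ i → i ≤ l - 1 → ∀ x : Fin i → k,
      (h' (i + 1)).mulVec (f' i x) = f' i ((h' i).mulVec x)) :
    g = 1 := by
  classical
  have hfr : ∀ n : ℕ, Module.finrank k (Fin n → k) = n := fun n => by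
    simp [Module.finrank_pi]
  set G : (Fin l → k) →ₗ[k] (Fin l → k) := Matrix.mulVecLin g with hGdef
  -- Step 1 : intertwining with the composites
  have key : ∀ d i : ℕ, i + d = l → 1 ≤ i →
      (∀ x, G (Fc i x) = Fc i ((h i).mulVec x)) ∧
      (∀ x, G (Fc' i x) = Fc' i ((h' i).mulVec x)) := by
    intro d
    induction d with
    | zero =>
      intro i hil _
      have : i = l := by omega
      subst this
      constructor <;> intro x <;>
        simp [hFl, hF'l, hhl, hh'l, hGdef, Matrix.mulVecLin_apply]
    | succ d ih =>
      intro i hil h1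
      have hle : i ≤ l - 1 := by omega
      obtain ⟨ih1, ih2⟩ := ih (i + 1) (by omega) (by omega)
      constructor
      · intro x
        rw [hFrec i h1 hle]
        simp only [LinearMap.comp_apply]
        rw [ih1 (f i x), hint i h1 hle x]
      · intro x
        rw [hF'rec i h1 hle]
        simp only [LinearMap.comp_apply]
        rw [ih2 (f' i x), hint' i h1 hle x]
  have hGF : ∀ i, 1 ≤ i → i ≤ l → ∀ x, G (Fc i x) = Fc i ((h i).mulVec x) :=
    fun i h1 h2 => (key (l - i) i (by omega) h1).1
  have hGF' : ∀ i, 1 ≤ i → i ≤ l → ∀ x, G (Fc' i x) = Fc' i ((h' i).mulVec x) :=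
    fun i h1 h2 => (key (l - i) i (by omega) h1).2
  -- Step 2 : consequences of genericity
  have main2 : ∀ i, 1 ≤ i → i ≤ l - 1 →
      Module.finrank k (LinearMap.range (Fc i)) = i ∧
      Module.finrank k (LinearMap.range (Fc' (l - i))) = l - i ∧
      LinearMap.range (Fc i) ⊓ LinearMap.range (Fc' (l - i)) = ⊥ := by
    intro i h1 h2
    set M : Matrix (Fin l) (Fin l) k := Matrix.of fun r c : Fin l =>
        if hc : (c : ℕ) < i then Fc i (Pi.single (⟨c, hc⟩ : Fin i) 1) r
        else Fc' (l - i)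
          (Pi.single (⟨(c : ℕ) - i, by have := c.isLt; omega⟩ : Fin (l - i)) 1) r with hM
    have hMdet : M.det ≠ 0 := hgen i h1 h2
    have hsurj : Function.Surjective M.mulVec :=
      Matrix.mulVec_surjective_iff_isUnit.2
        ((Matrix.isUnit_iff_isUnit_det M).2 (isUnit_iff_ne_zero.2 hMdet))
    have htop : LinearMap.range (Fc i) ⊔ LinearMap.range (Fc' (l - i)) = ⊤ := by
      rw [eq_top_iff]
      intro y _
      obtain ⟨x, hx⟩ := hsurj y
      have hy : y = ∑ c : Fin l, x c • (fun r => M r c) := by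
        rw [← hx]
        funext r
        rw [Finset.sum_apply]
        simp [Matrix.mulVec, dotProduct, mul_comm]
      rw [hy]
      refine Submodule.sum_mem _ fun c _ => Submodule.smul_mem _ _ ?_
      by_cases hc : (c : ℕ) < i
      · have : (fun r => M r c) = Fc i (Pi.single (⟨c, hc⟩ : Fin i) 1) := by
          funext r; simp only [hM, Matrix.of_apply]; rw [dif_pos hc]
        rw [this]
        exact Submodule.mem_sup_left (LinearMap.mem_range_self _ _)
      · have : (fun r => M r c) = Fc' (l - i)
            (Pi.single (⟨(c : ℕ) - i, by have := c.isLt; omega⟩ : Fin (l - i)) 1) := by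
          funext r; simp only [hM, Matrix.of_apply]; rw [dif_neg hc]
        rw [this]
        exact Submodule.mem_sup_right (LinearMap.mem_range_self _ _)
    have hVle : Module.finrank k (LinearMap.range (Fc i)) ≤ i := by
      have := LinearMap.finrank_range_le (Fc i); rwa [hfr i] at this
    have hWle : Module.finrank k (LinearMap.range (Fc' (l - i))) ≤ l - i := by
      have := LinearMap.finrank_range_le (Fc' (l - i)); rwa [hfr (l - i)] at this
    have hsum := Submodule.finrank_sup_add_finrank_inf_eq
      (LinearMap.range (Fc i)) (LinearMap.range (Fc' (l - i)))
    rw [htop, finrank_top, hfr l] at hsum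
    have hV : Module.finrank k (LinearMap.range (Fc i)) = i := by omega
    have hW : Module.finrank k (LinearMap.range (Fc' (l - i))) = l - i := by omega
    have h0 : Module.finrank k
        ((LinearMap.range (Fc i) ⊓ LinearMap.range (Fc' (l - i))) :
          Submodule k (Fin l → k)) = 0 := by omega
    exact ⟨hV, hW, Submodule.finrank_eq_zero.mp h0⟩
  have hVrank : ∀ i, 1 ≤ i → i ≤ l →
      Module.finrank k (LinearMap.range (Fc i)) = i := by
    intro i h1 h2
    rcases eq_or_lt_of_le h2 with rfl | hlt
    · rw [hFl, LinearMap.range_id, finrank_top, hfr]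
    · exact (main2 i h1 (by omega)).1
  have hWrank : ∀ j, 1 ≤ j → j ≤ l →
      Module.finrank k (LinearMap.range (Fc' j)) = j := by
    intro j h1 h2
    rcases eq_or_lt_of_le h2 with rfl | hlt
    · rw [hF'l, LinearMap.range_id, finrank_top, hfr]
    · have := (main2 (l - j) (by omega) (by omega)).2.1
      rwa [show l - (l - j) = j by omega] at this
  have hVWbot : ∀ i, 1 ≤ i → i ≤ l - 1 →
      LinearMap.range (Fc i) ⊓ LinearMap.range (Fc' (l - i)) = ⊥ :=
    fun i h1 h2 => (main2 i h1 h2).2.2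
  have hFinj : ∀ i, 1 ≤ i → i ≤ l → Function.Injective (Fc i) := by
    intro i h1 h2
    rw [← LinearMap.ker_eq_bot]
    have := LinearMap.finrank_range_add_finrank_ker (Fc i)
    rw [hVrank i h1 h2, hfr i] at this
    exact Submodule.finrank_eq_zero.mp (by omega)
  -- monotonicity of the flags
  have hVstep : ∀ i, 1 ≤ i → i ≤ l - 1 →
      LinearMap.range (Fc i) ≤ LinearMap.range (Fc (i + 1)) := by
    intro i h1 h2; rw [hFrec i h1 h2]; exact LinearMap.range_comp_le_range _ _
  have hWstep : ∀ i, 1 ≤ i → i ≤ l - 1 →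
      LinearMap.range (Fc' i) ≤ LinearMap.range (Fc' (i + 1)) := by
    intro i h1 h2; rw [hF'rec i h1 h2]; exact LinearMap.range_comp_le_range _ _
  have hVmono : ∀ i j, 1 ≤ i → i ≤ j → j ≤ l →
      LinearMap.range (Fc i) ≤ LinearMap.range (Fc j) := by
    intro i j h1 hij
    induction j, hij using Nat.le_induction with
    | base => intro; exact le_rfl
    | succ j hj ihj =>
      intro hjl
      exact le_trans (ihj (by omega)) (hVstep j (by omega) (by omega))
  have hWmono : ∀ i j, 1 ≤ i → i ≤ j → j ≤ l →
      LinearMap.range (Fc' i) ≤ LinearMap.range (Fc' j) := by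
    intro i j h1 hij
    induction j, hij using Nat.le_induction with
    | base => intro; exact le_rfl
    | succ j hj ihj =>
      intro hjl
      exact le_trans (ihj (by omega)) (hWstep j (by omega) (by omega))
  -- invariance under G
  have hGV : ∀ i, 1 ≤ i → i ≤ l → ∀ v ∈ LinearMap.range (Fc i),
      G v ∈ LinearMap.range (Fc i) := by
    rintro i h1 h2 v ⟨x, rfl⟩
    rw [hGF i h1 h2 x]; exact LinearMap.mem_range_self _ _
  have hGW : ∀ i, 1 ≤ i → i ≤ l → ∀ v ∈ LinearMap.range (Fc' i),
      G v ∈ LinearMap.range (Fc' i) := by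
    rintro i h1 h2 v ⟨x, rfl⟩
    rw [hGF' i h1 h2 x]; exact LinearMap.mem_range_self _ _
  -- Step 3 : the eigenlines
  let L : ℕ → Submodule k (Fin l → k) := fun i =>
    LinearMap.range (Fc i) ⊓ LinearMap.range (Fc' (l - i + 1))
  have hLdef : ∀ i, L i = LinearMap.range (Fc i) ⊓ LinearMap.range (Fc' (l - i + 1)) :=
    fun _ => rfl
  have hLrank : ∀ i, 1 ≤ i → i ≤ l → Module.finrank k (L i) = 1 := by
    intro i h1 h2
    rw [hLdef i]
    have hW1 : 1 ≤ l - i + 1 := by omega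
    have hW2 : l - i + 1 ≤ l := by omega
    have hge : 1 ≤ Module.finrank k
        ((LinearMap.range (Fc i) ⊓ LinearMap.range (Fc' (l - i + 1))) :
          Submodule k (Fin l → k)) := by
      have hsum := Submodule.finrank_sup_add_finrank_inf_eq
        (LinearMap.range (Fc i)) (LinearMap.range (Fc' (l - i + 1)))
      rw [hVrank i h1 h2, hWrank _ hW1 hW2] at hsum
      have hsle : Module.finrank k
          ((LinearMap.range (Fc i) ⊔ LinearMap.range (Fc' (l - i + 1))) :
            Submodule k (Fin l → k)) ≤ l := by
        have := Submodule.finrank_le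
          ((LinearMap.range (Fc i) ⊔ LinearMap.range (Fc' (l - i + 1))) :
            Submodule k (Fin l → k))
        rwa [hfr l] at this
      omega
    have hle1 : Module.finrank k
        ((LinearMap.range (Fc i) ⊓ LinearMap.range (Fc' (l - i + 1))) :
          Submodule k (Fin l → k)) ≤ 1 := by
      rcases eq_or_lt_of_le h2 with heq | hlt
      · have hle : LinearMap.range (Fc i) ⊓ LinearMap.range (Fc' (l - i + 1)) ≤
            LinearMap.range (Fc' (l - i + 1)) := inf_le_right
        have := Submodule.finrank_mono hle
        rw [hWrank (l - i + 1) (by omega) (by omega)] at this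
        omega
      · have hil : i ≤ l - 1 := by omega
        have hbot : (LinearMap.range (Fc i) ⊓ LinearMap.range (Fc' (l - i + 1))) ⊓
            LinearMap.range (Fc' (l - i)) = ⊥ := by
          rw [← le_bot_iff, ← hVWbot i h1 hil]
          exact inf_le_inf_right _ inf_le_left
        have hsub : (LinearMap.range (Fc i) ⊓ LinearMap.range (Fc' (l - i + 1))) ⊔
            LinearMap.range (Fc' (l - i)) ≤
            LinearMap.range (Fc' (l - i + 1)) := by
          refine sup_le inf_le_right (hWmono (l - i) (l - i + 1) (by omega) (by omega) hW2)
        have hsum := Submodule.finrank_sup_add_finrank_inf_eq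
          (LinearMap.range (Fc i) ⊓ LinearMap.range (Fc' (l - i + 1)))
          (LinearMap.range (Fc' (l - i)))
        rw [hbot, finrank_bot, hWrank (l - i) (by omega) (by omega)] at hsum
        have hle' := Submodule.finrank_mono hsub
        rw [hWrank (l - i + 1) hW1 hW2] at hle'
        omega
    omega
  have hex : ∀ i : ℕ, ∃ v : Fin l → k, 1 ≤ i → i ≤ l → v ∈ L i ∧ v ≠ 0 := by
    intro i
    by_cases hi : 1 ≤ i ∧ i ≤ l
    · have hne : L i ≠ ⊥ := by
        intro hb
        have := hLrank i hi.1 hi.2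
        rw [hb, finrank_bot] at this
        omega
      obtain ⟨v, hv, hv0⟩ := (Submodule.ne_bot_iff (L i)).1 hne
      exact ⟨v, fun _ _ => ⟨hv, hv0⟩⟩
    · exact ⟨0, fun h1 h2 => absurd ⟨h1, h2⟩ hi⟩
  choose u hu using hex
  have hLspan : ∀ i, 1 ≤ i → i ≤ l → L i = Submodule.span k {u i} := by
    intro i h1 h2
    obtain ⟨hmem, hne⟩ := hu i h1 h2
    refine (Submodule.eq_of_le_of_finrank_eq
      ((Submodule.span_singleton_le_iff_mem _ _).2 hmem) ?_).symm
    rw [finrank_span_singleton hne, hLrank i h1 h2]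
  have huVW : ∀ i, 1 ≤ i → i ≤ l → u i ∈ LinearMap.range (Fc i) ∧
      u i ∈ LinearMap.range (Fc' (l - i + 1)) := by
    intro i h1 h2
    have := (hu i h1 h2).1
    rw [hLdef i] at this
    exact Submodule.mem_inf.1 this
  have hex2 : ∀ i : ℕ, ∃ c : k, 1 ≤ i → i ≤ l → G (u i) = c • u i := by
    intro i
    by_cases hi : 1 ≤ i ∧ i ≤ l
    · have hmem : G (u i) ∈ L i := by
        obtain ⟨hm1, hm2⟩ := huVW i hi.1 hi.2
        rw [hLdef i]
        exact Submodule.mem_inf.2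
          ⟨hGV i hi.1 hi.2 _ hm1, hGW (l - i + 1) (by omega) (by omega) _ hm2⟩
      rw [hLspan i hi.1 hi.2] at hmem
      obtain ⟨a, ha⟩ := Submodule.mem_span_singleton.1 hmem
      exact ⟨a, fun _ _ => ha.symm⟩
    · exact ⟨0, fun h1 h2 => absurd ⟨h1, h2⟩ hi⟩
  choose lam hlam using hex2
  -- Step 4 : the spans of the eigenvectors
  have huV : ∀ i, 1 ≤ i → i ≤ l → u i ∈ LinearMap.range (Fc i) :=
    fun i h1 h2 => (huVW i h1 h2).1
  have hspan : ∀ i, 1 ≤ i → i ≤ l →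
      Submodule.span k (u '' Set.Icc 1 i) = LinearMap.range (Fc i) := by
    intro i h1
    induction i, h1 using Nat.le_induction with
    | base =>
      intro h2
      rw [show Set.Icc 1 1 = {1} from Set.Icc_self 1, Set.image_singleton]
      refine Submodule.eq_of_le_of_finrank_eq
        ((Submodule.span_singleton_le_iff_mem _ _).2 (huV 1 le_rfl (by omega))) ?_
      rw [finrank_span_singleton (hu 1 le_rfl (by omega)).2, hVrank 1 le_rfl (by omega)]
    | succ i hi ihi =>
      intro h2
      have hIcc : Set.Icc (1 : ℕ) (i + 1) = insert (i + 1) (Set.Icc 1 i) := by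
        ext x; simp only [Set.mem_Icc, Set.mem_insert_iff]; omega
      rw [hIcc, Set.image_insert_eq, Submodule.span_insert, ihi (by omega)]
      have huW : u (i + 1) ∈ LinearMap.range (Fc' (l - i)) := by
        have := (huVW (i + 1) (by omega) h2).2
        rwa [show l - (i + 1) + 1 = l - i by omega] at this
      have hinf : Submodule.span k {u (i + 1)} ⊓ LinearMap.range (Fc i) = ⊥ := by
        rw [← le_bot_iff, ← hVWbot i hi (by omega)]
        exact le_inf inf_le_right
          (le_trans inf_le_left ((Submodule.span_singleton_le_iff_mem _ _).2 huW))
      refine Submodule.eq_of_le_of_finrank_eq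
        (sup_le ((Submodule.span_singleton_le_iff_mem _ _).2 (huV (i + 1) (by omega) h2))
          (hVmono i (i + 1) hi (by omega) (by omega))) ?_
      have hsum := Submodule.finrank_sup_add_finrank_inf_eq
        (Submodule.span k {u (i + 1)}) (LinearMap.range (Fc i))
      rw [hinf, finrank_bot, finrank_span_singleton (hu (i + 1) (by omega) h2).2,
        hVrank i hi (by omega)] at hsum
      rw [hVrank (i + 1) (by omega) h2]
      omega
  -- Step 5 : determinants are products of eigenvalues
  have hdetprod : ∀ i, 1 ≤ i → i ≤ l →
      (h i).det = ∏ j ∈ Finset.Icc 1 i, lam j := by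
    intro i h1 h2
    have hinj := hFinj i h1 h2
    have hex3 : ∀ t : Fin i, ∃ x : Fin i → k, Fc i x = u (↑t + 1) := by
      intro t
      have hmem : u (↑t + 1) ∈ LinearMap.range (Fc i) :=
        hVmono (↑t + 1) i (by omega) (by have := t.isLt; omega) h2
          (huV (↑t + 1) (by omega) (by have := t.isLt; omega))
      exact hmem
    choose xv hxv using hex3
    have hxeig : ∀ t : Fin i, (h i).mulVec (xv t) = lam (↑t + 1) • xv t := by
      intro t
      apply hinj
      rw [map_smul, hxv, ← hGF i h1 h2, hxv,
        hlam (↑t + 1) (by omega) (by have := t.isLt; omega)]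
    have himg : Fc i '' Set.range xv = u '' Set.Icc 1 i := by
      ext y
      simp only [Set.mem_image, Set.mem_range, Set.mem_Icc]
      constructor
      · rintro ⟨-, ⟨t, rfl⟩, rfl⟩
        exact ⟨↑t + 1, ⟨by omega, by have := t.isLt; omega⟩, (hxv t).symm⟩
      · rintro ⟨j, ⟨hj1, hj2⟩, rfl⟩
        refine ⟨xv ⟨j - 1, by omega⟩, ⟨_, rfl⟩, ?_⟩
        have hidx : (↑(⟨j - 1, by omega⟩ : Fin i) : ℕ) + 1 = j := by
          simp only [Fin.val_mk]; omega
        rw [hxv, hidx]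
    have hsp : ⊤ ≤ Submodule.span k (Set.range xv) := by
      have hmap : Submodule.map (Fc i) (Submodule.span k (Set.range xv)) =
          Submodule.map (Fc i) ⊤ := by
        rw [Submodule.map_span, himg, hspan i h1 h2, Submodule.map_top]
      exact ge_of_eq (Submodule.map_injective_of_injective hinj hmap)
    have hcard : Fintype.card (Fin i) = Module.finrank k (Fin i → k) := by
      rw [hfr i, Fintype.card_fin]
    set b := basisOfTopLeSpanOfCardEqFinrank xv hsp hcard with hbdef
    have hb : ⇑b = xv := coe_basisOfTopLeSpanOfCardEqFinrank xv hsp hcard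
    have hml : Matrix.toLin' (h i) = Matrix.mulVecLin (h i) := by
      refine LinearMap.ext fun x => ?_
      rw [Matrix.toLin'_apply, Matrix.mulVecLin_apply]
    have hdet1 : (h i).det = LinearMap.det (Matrix.mulVecLin (h i)) := by
      rw [← hml]
      exact (LinearMap.det_toLin' (h i)).symm
    have hdiag : LinearMap.toMatrix b b (Matrix.mulVecLin (h i)) =
        Matrix.diagonal (fun t : Fin i => lam (↑t + 1)) := by
      ext r c
      rw [LinearMap.toMatrix_apply]
      have hbc : b c = xv c := by rw [hb]
      rw [hbc, Matrix.mulVecLin_apply, hxeig c, ← hbc, map_smul, b.repr_self]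
      simp only [Finsupp.smul_single, smul_eq_mul, mul_one, Finsupp.single_apply,
        Matrix.diagonal_apply]
      rcases eq_or_ne r c with rfl | hrc
      · simp
      · simp [hrc, Ne.symm hrc]
    rw [hdet1, ← LinearMap.det_toMatrix b, hdiag, Matrix.det_diagonal]
    rw [Fin.prod_univ_eq_prod_range (fun t => lam (t + 1)) i]
    rw [show Finset.Icc 1 i = Finset.Ico 1 (i + 1) by rw [Finset.Ico_add_one_right_eq_Icc],
      Finset.prod_Ico_eq_prod_range]
    simp [add_comm]
  -- Step 6 : all eigenvalues are 1
  have hprod1 : ∀ i, 1 ≤ i → i ≤ l → ∏ j ∈ Finset.Icc 1 i, lam j = 1 := by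
    intro i h1 h2
    rcases eq_or_lt_of_le h2 with rfl | hlt
    · rw [← hdetprod i h1 h2, hhl, hg]
    · rw [← hdetprod i h1 h2]
      exact (hdet i h1 (by omega)).1
  have hlam1 : ∀ j, 1 ≤ j → j ≤ l → lam j = 1 := by
    intro j h1 h2
    rcases Nat.exists_eq_add_of_le h1 with ⟨m, rfl⟩
    cases m with
    | zero =>
      have := hprod1 1 le_rfl (by omega)
      rwa [Finset.Icc_self, Finset.prod_singleton] at this
    | succ m =>
      have hp1 := hprod1 (1 + (m + 1)) h1 h2
      have hp0 := hprod1 (1 + m) (by omega) (by omega)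
      rw [show 1 + (m + 1) = (1 + m) + 1 by omega,
        Finset.prod_Icc_succ_top (by omega), hp0, one_mul] at hp1
      rwa [show 1 + (m + 1) = 1 + m + 1 by omega]
  -- Step 7 : conclude
  have hspantop : Submodule.span k (u '' Set.Icc 1 l) = ⊤ := by
    rw [hspan l (by omega) le_rfl, hFl, LinearMap.range_id]
  have hGid : G = LinearMap.id := by
    refine LinearMap.ext_on hspantop ?_
    rintro - ⟨j, hj, rfl⟩
    simp only [Set.mem_Icc] at hj
    rw [LinearMap.id_apply, hlam j hj.1 hj.2, hlam1 j hj.1 hj.2, one_smul]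
  ext r c
  have hc : G (Pi.single c 1) = Pi.single c 1 := by rw [hGid]; rfl
  have hc2 : g.mulVec (Pi.single c 1) = Pi.single c 1 := by
    rwa [hGdef, Matrix.mulVecLin_apply] at hc
  have := congrFun hc2 r
  rw [Matrix.mulVec_single] at this
  simpa [Matrix.one_apply, Pi.single_apply, eq_comm] using this
end
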